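/- Let μ > 0 and let P, Q be probability measures on a measurable space Ω such that for every measurable test φ : Ω → [0,1], 1 − ∫ φ dQ ≥ Φ(Φ^{-1}(1 − ∫ φ dP) − μ). Then for every ε ≥ 0 and every measurable set A ⊆ Ω, P(A) ≤ e^ε Q(A) + δ(ε), where δ(ε) = Φ(−ε/μ + μ/2) − e^ε Φ(−ε/μ − μ/2). (This is one direction of Corollary 1: a μ-GDP mechanism is (ε, δ(ε))-DP for all ε ≥ 0.) -/

import Mathlib

open MeasureTheory ProbabilityTheory Set Filter
open scoped Topology

/-- Standard normal cumulative distribution function Φ. -/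
noncomputable def stdGaussCDF (x : ℝ) : ℝ := ((gaussianReal 0 1) (Set.Iic x)).toReal

/-- Inverse Φ⁻¹ of the standard normal CDF (on (0,1)). -/
noncomputable def stdGaussCDFInv (p : ℝ) : ℝ := Function.invFun stdGaussCDF p

lemma stdGaussCDF_eq_cdf : stdGaussCDF = cdf (gaussianReal 0 1) := by
  funext x; rw [stdGaussCDF, cdf_eq_real, measureReal_def]

lemma stdGaussCDF_eq_integral (x : ℝ) :
    stdGaussCDF x = ∫ t in Set.Iic x, gaussianPDFReal 0 1 t := by
  rw [stdGaussCDF, gaussianReal_apply_eq_integral _ one_ne_zero,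
    ENNReal.toReal_ofReal (integral_nonneg fun t => gaussianPDFReal_nonneg _ _ _)]

lemma stdGaussCDF_sub (a b : ℝ) :
    stdGaussCDF b - stdGaussCDF a = ∫ t in a..b, gaussianPDFReal 0 1 t := by
  rw [stdGaussCDF_eq_integral, stdGaussCDF_eq_integral,
    intervalIntegral.integral_Iic_sub_Iic (integrable_gaussianPDFReal 0 1).integrableOn
      (integrable_gaussianPDFReal 0 1).integrableOn]

lemma exp_mul_pdf (ε m x : ℝ) :
    Real.exp ε * gaussianPDFReal 0 1 (x - m) =
      Real.exp (ε + m * x - m ^ 2 / 2) * gaussianPDFReal 0 1 x := by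
  simp only [gaussianPDFReal, NNReal.coe_one, mul_one, sub_zero]
  rw [mul_left_comm, ← Real.exp_add, mul_left_comm, ← Real.exp_add]
  congr 2
  ring

lemma tendsto_stdGaussCDF_atBot : Tendsto stdGaussCDF atBot (𝓝 0) := by
  rw [stdGaussCDF_eq_cdf]; exact tendsto_cdf_atBot _

lemma tendsto_stdGaussCDF_atTop : Tendsto stdGaussCDF atTop (𝓝 1) := by
  rw [stdGaussCDF_eq_cdf]; exact tendsto_cdf_atTop _

lemma monotone_stdGaussCDF : Monotone stdGaussCDF := by
  rw [stdGaussCDF_eq_cdf]; exact monotone_cdf _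

lemma continuous_stdGaussCDF : Continuous stdGaussCDF := by
  have hC : ∀ x : ℝ, ‖gaussianPDFReal 0 1 x‖ ≤ (Real.sqrt (2 * Real.pi))⁻¹ := by
    intro x
    rw [Real.norm_of_nonneg (gaussianPDFReal_nonneg _ _ _)]
    simp only [gaussianPDFReal, NNReal.coe_one, mul_one, sub_zero]
    calc (Real.sqrt (2 * Real.pi))⁻¹ * Real.exp (-x ^ 2 / 2)
        ≤ (Real.sqrt (2 * Real.pi))⁻¹ * 1 := by
          gcongr
          exact Real.exp_le_one_iff.mpr (by nlinarith [sq_nonneg x])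
      _ = _ := mul_one _
  have hlip : LipschitzWith ⟨(Real.sqrt (2 * Real.pi))⁻¹, by positivity⟩ stdGaussCDF := by
    apply LipschitzWith.of_dist_le_mul
    intro a b
    rw [Real.dist_eq, Real.dist_eq, stdGaussCDF_sub b a]
    calc |∫ t in b..a, gaussianPDFReal 0 1 t|
        ≤ (Real.sqrt (2 * Real.pi))⁻¹ * |a - b| := by
          rw [← Real.norm_eq_abs]
          exact intervalIntegral.norm_integral_le_of_norm_le_const fun x _ => hC x
      _ = _ := rfl
  exact hlip.continuous

lemma stdGaussCDF_surj {p : ℝ} (h0 : 0 < p) (h1 : p < 1) : ∃ t, stdGaussCDF t = p := by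
  obtain ⟨a, ha⟩ := (tendsto_stdGaussCDF_atBot.eventually_lt_const h0).exists
  obtain ⟨b, hb⟩ := (tendsto_stdGaussCDF_atTop.eventually_const_lt h1).exists
  have hab : a ≤ b := by
    by_contra hlt
    exact absurd (monotone_stdGaussCDF (le_of_not_ge hlt)) (by linarith)
  obtain ⟨t, _, ht⟩ := intermediate_value_Icc hab continuous_stdGaussCDF.continuousOn
    ⟨ha.le, hb.le⟩
  exact ⟨t, ht⟩


lemma integrable_pdf_shift (m : ℝ) : Integrable (fun x => gaussianPDFReal 0 1 (x - m)) := by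
  have : (fun x => gaussianPDFReal 0 1 (x - m)) = gaussianPDFReal (0 + m) 1 := by
    funext x; exact gaussianPDFReal_sub x m
  rw [this]; exact integrable_gaussianPDFReal _ _

lemma key_ineq {μ ε : ℝ} (hμ : 0 < μ) (t : ℝ) :
    stdGaussCDF t - Real.exp ε * stdGaussCDF (t - μ) ≤
      stdGaussCDF (-ε / μ + μ / 2) - Real.exp ε * stdGaussCDF (-ε / μ - μ / 2) := by
  set c : ℝ := -ε / μ + μ / 2 with hc
  have hcμ : -ε / μ - μ / 2 = c - μ := by rw [hc]; ring
  rw [hcμ]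
  have hmc : μ * c = -ε + μ ^ 2 / 2 := by
    rw [hc]; field_simp
  -- pointwise comparisons
  have hpt1 : ∀ x, c ≤ x →
      gaussianPDFReal 0 1 x ≤ Real.exp ε * gaussianPDFReal 0 1 (x - μ) := by
    intro x hx
    rw [exp_mul_pdf]
    have h1 : (1 : ℝ) ≤ Real.exp (ε + μ * x - μ ^ 2 / 2) := by
      rw [Real.one_le_exp_iff]
      have := mul_le_mul_of_nonneg_left hx hμ.le
      rw [hmc] at this; linarith
    nlinarith [gaussianPDFReal_nonneg 0 1 x]
  have hpt2 : ∀ x, x ≤ c →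
      Real.exp ε * gaussianPDFReal 0 1 (x - μ) ≤ gaussianPDFReal 0 1 x := by
    intro x hx
    rw [exp_mul_pdf]
    have h1 : Real.exp (ε + μ * x - μ ^ 2 / 2) ≤ 1 := by
      rw [Real.exp_le_one_iff]
      have := mul_le_mul_of_nonneg_left hx hμ.le
      rw [hmc] at this; linarith
    nlinarith [gaussianPDFReal_nonneg 0 1 x]
  have hi1 : ∀ a b : ℝ, IntervalIntegrable (gaussianPDFReal 0 1) volume a b :=
    fun a b => (integrable_gaussianPDFReal 0 1).intervalIntegrable
  have hi2 : ∀ a b : ℝ, IntervalIntegrable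
      (fun x => Real.exp ε * gaussianPDFReal 0 1 (x - μ)) volume a b :=
    fun a b => ((integrable_pdf_shift μ).const_mul _).intervalIntegrable
  have e1 : stdGaussCDF t - stdGaussCDF c = ∫ x in c..t, gaussianPDFReal 0 1 x :=
    stdGaussCDF_sub c t
  have e2 : stdGaussCDF (t - μ) - stdGaussCDF (c - μ)
      = ∫ x in c..t, gaussianPDFReal 0 1 (x - μ) :=
    (stdGaussCDF_sub (c - μ) (t - μ)).trans
      (intervalIntegral.integral_comp_sub_right (gaussianPDFReal 0 1) μ).symm
  have e3 : Real.exp ε * ∫ x in c..t, gaussianPDFReal 0 1 (x - μ)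
      = ∫ x in c..t, Real.exp ε * gaussianPDFReal 0 1 (x - μ) :=
    (intervalIntegral.integral_const_mul _ _).symm
  have e2' : Real.exp ε * stdGaussCDF (t - μ) - Real.exp ε * stdGaussCDF (c - μ)
      = ∫ x in c..t, Real.exp ε * gaussianPDFReal 0 1 (x - μ) := by
    rw [← e3, ← mul_sub, e2]
  rcases le_total c t with hct | htc
  · have h0 : 0 ≤ ∫ x in c..t,
        (Real.exp ε * gaussianPDFReal 0 1 (x - μ) - gaussianPDFReal 0 1 x) := by
      apply intervalIntegral.integral_nonneg hct
      intro u hu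
      exact sub_nonneg.mpr (hpt1 u hu.1)
    rw [intervalIntegral.integral_sub (hi2 c t) (hi1 c t)] at h0
    linarith [e1, e2', h0]
  · have h0 : 0 ≤ ∫ x in t..c,
        (gaussianPDFReal 0 1 x - Real.exp ε * gaussianPDFReal 0 1 (x - μ)) := by
      apply intervalIntegral.integral_nonneg htc
      intro u hu
      exact sub_nonneg.mpr (hpt2 u hu.2)
    rw [intervalIntegral.integral_sub (hi1 t c) (hi2 t c)] at h0
    have hs1 : (∫ x in c..t, gaussianPDFReal 0 1 x)
        = -∫ x in t..c, gaussianPDFReal 0 1 x := intervalIntegral.integral_symm t c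
    have hs2 : (∫ x in c..t, Real.exp ε * gaussianPDFReal 0 1 (x - μ))
        = -∫ x in t..c, Real.exp ε * gaussianPDFReal 0 1 (x - μ) :=
      intervalIntegral.integral_symm t c
    linarith [e1, e2', hs1, hs2, h0]


/-- One direction of Corollary 1 of Dong et al.: if the pair `(P, Q)` satisfies the `μ`-GDP
trade-off bound (every measurable test `φ : Ω → [0,1]` has type-II error at least
`Φ(Φ⁻¹(1 - type-I error) - μ)`), then for every `ε ≥ 0` and measurable `A`,
`P(A) ≤ e^ε Q(A) + δ(ε)` with `δ(ε) = Φ(-ε/μ + μ/2) - e^ε Φ(-ε/μ - μ/2)`. -/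
theorem GDP_implies_DP {Ω : Type*} [MeasurableSpace Ω] (μ : ℝ) (hμ : 0 < μ)
    (P Q : Measure Ω) [IsProbabilityMeasure P] [IsProbabilityMeasure Q]
    (hGDP : ∀ φ : Ω → ℝ, Measurable φ → (∀ x, φ x ∈ Set.Icc (0 : ℝ) 1) →
      1 - ∫ x, φ x ∂Q ≥ stdGaussCDF (stdGaussCDFInv (1 - ∫ x, φ x ∂P) - μ)) :
    ∀ ε : ℝ, 0 ≤ ε → ∀ A : Set Ω, MeasurableSet A →
      (P A).toReal ≤ Real.exp ε * (Q A).toReal +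
        (stdGaussCDF (-ε / μ + μ / 2) - Real.exp ε * stdGaussCDF (-ε / μ - μ / 2)) := by
  intro ε hε A hA
  set δ : ℝ := stdGaussCDF (-ε / μ + μ / 2) - Real.exp ε * stdGaussCDF (-ε / μ - μ / 2) with hδ
  set α : ℝ := (P A).toReal with hα
  set q : ℝ := (Q A).toReal with hq
  have hq0 : 0 ≤ q := ENNReal.toReal_nonneg
  have hα1 : α ≤ 1 := by
    rw [hα]
    calc (P A).toReal ≤ (P Set.univ).toReal :=
          ENNReal.toReal_mono (measure_ne_top _ _) (measure_mono (Set.subset_univ A))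
      _ = 1 := by simp
  have hδ0 : 0 ≤ δ := by
    have htb : Tendsto (fun t : ℝ => stdGaussCDF t - Real.exp ε * stdGaussCDF (t - μ))
        atBot (𝓝 (0 - Real.exp ε * 0)) := by
      refine Tendsto.sub tendsto_stdGaussCDF_atBot (Tendsto.const_mul _ ?_)
      exact tendsto_stdGaussCDF_atBot.comp (tendsto_atBot_add_const_right _ (-μ) tendsto_id)
    have h := le_of_tendsto' htb (fun t => key_ineq (ε := ε) hμ t)
    rw [hδ]; linarith
  -- integral of the tests
  have hint : ∀ (s : ℝ) (ν : Measure Ω) (_ : IsProbabilityMeasure ν),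
      ∫ x, (s + (1 - s) * Aᶜ.indicator (fun _ => (1:ℝ)) x) ∂ν
        = s + (1 - s) * (1 - (ν A).toReal) := by
    intro s ν hν
    have hm : (ν Aᶜ).toReal = 1 - (ν A).toReal := by
      rw [measure_compl hA (measure_ne_top _ _), measure_univ,
        ENNReal.toReal_sub_of_le prob_le_one ENNReal.one_ne_top, ENNReal.toReal_one]
    rw [integral_add (integrable_const _)
        (((integrable_const (1 : ℝ)).indicator hA.compl).const_mul _),
      integral_const, integral_const_mul, integral_indicator_const (1:ℝ) hA.compl, measureReal_def ν Aᶜ, hm]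
    simp
  rcases eq_or_lt_of_le (ENNReal.toReal_nonneg : (0:ℝ) ≤ α) with h0 | h0
  · have : 0 ≤ Real.exp ε * q := by positivity
    linarith
  · have hmain : ∀ s : ℝ, s ∈ Set.Ioo (0:ℝ) 1 → (1 - s) * (α - Real.exp ε * q) ≤ δ := by
      intro s hs
      set φ : Ω → ℝ := fun x => s + (1 - s) * Aᶜ.indicator (fun _ => (1:ℝ)) x with hφ
      have hmeas : Measurable φ :=
        measurable_const.add ((measurable_one.indicator hA.compl).const_mul _)
      have hrange : ∀ x, φ x ∈ Set.Icc (0:ℝ) 1 := by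
        intro x
        by_cases hx : x ∈ Aᶜ
        · simp only [hφ, Set.indicator_of_mem hx]
          constructor <;> nlinarith [hs.1, hs.2]
        · simp only [hφ, Set.indicator_of_notMem hx]
          constructor <;> nlinarith [hs.1, hs.2]
      have hGDP' := hGDP φ hmeas hrange
      have heqP : 1 - ∫ x, φ x ∂P = (1 - s) * α := by
        rw [hφ, hint s P inferInstance]; ring
      have heqQ : 1 - ∫ x, φ x ∂Q = (1 - s) * q := by
        rw [hφ, hint s Q inferInstance]; ring
      rw [heqP, heqQ] at hGDP'
      have hPa : (0:ℝ) < (1 - s) * α := by nlinarith [hs.1, hs.2]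
      have hPb : (1 - s) * α < 1 := by nlinarith [hs.1, hs.2]
      have hinv : stdGaussCDF (stdGaussCDFInv ((1 - s) * α)) = (1 - s) * α :=
        Function.invFun_eq (stdGaussCDF_surj hPa hPb)
      have hk := key_ineq (ε := ε) hμ (stdGaussCDFInv ((1 - s) * α))
      rw [hinv] at hk
      have hmul : Real.exp ε * stdGaussCDF (stdGaussCDFInv ((1 - s) * α) - μ)
          ≤ Real.exp ε * ((1 - s) * q) :=
        mul_le_mul_of_nonneg_left hGDP' (Real.exp_pos ε).le
      calc (1 - s) * (α - Real.exp ε * q)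
          = (1 - s) * α - Real.exp ε * ((1 - s) * q) := by ring
        _ ≤ δ := by rw [hδ]; linarith
    have hlim : α - Real.exp ε * q ≤ δ := by
      have htend : Tendsto (fun s : ℝ => (1 - s) * (α - Real.exp ε * q)) (𝓝[>] 0)
          (𝓝 (α - Real.exp ε * q)) := by
        have hcont : Tendsto (fun s : ℝ => (1 - s) * (α - Real.exp ε * q)) (𝓝 0)
            (𝓝 ((1 - 0) * (α - Real.exp ε * q))) :=
          ((continuous_const.sub continuous_id).mul continuous_const).tendsto 0
        simpa using hcont.mono_left nhdsWithin_le_nhds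
      refine le_of_tendsto htend ?_
      filter_upwards [Ioo_mem_nhdsGT_of_mem (by norm_num : (0:ℝ) ∈ Set.Ico 0 1)] with s hs
      exact hmain s hs
    linarith
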